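/- Let d = 3, q ≥ 2, and l_1 = 0, l_2 ∈ ℤ_q a unit, and let 𝒦 = {β = (b_{i,j}) ∈ GL_2(ℤ) : l_2 + ∏_k(t+l_k)^{b_{k,1}} − ∏_k(t+l_k)^{b_{k,2}} = 0 and −l_2 + ∏_k(t+l_k)^{b_{k,2}} − ∏_k(t+l_k)^{b_{k,1}} = 0 hold in R_3(ℤ_q), and likewise for β^{−1}}. Then: (i) if q > 2 and l_2 = −1 in ℤ_q, 𝒦 is the two-element group generated by [[1, 0], [−1, −1]]; (ii) if q > 2 and l_2 = 1 in ℤ_q, 𝒦 is the two-element group generated by [[−1, −1], [0, 1]]; (iii) if q = 2 (so l_2 = 1), 𝒦 is isomorphic to the dihedral group of order 6 and consists of the identity together with the five matrices [[1,0],[−1,−1]], [[−1,−1],[0,1]], [[−1,−1],[1,0]], [[0,1],[−1,−1]], and [[0,1],[1,0]]; (iv) if q > 2 and l_2 ∉ {1, −1} in ℤ_q, 𝒦 is trivial. -/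

import Mathlib

open Polynomial

/-- The multiplicative set of `ℤ_q[t]` generated by the polynomials `t + l i`. -/
noncomputable def dlSub (q d : ℕ) (l : Fin (d-1) → ZMod q) : Submonoid (Polynomial (ZMod q)) :=
  Submonoid.closure {p | ∃ i : Fin (d-1), p = X + C (l i)}

/-- The ring `R_d(ℤ_q) = ℤ_q[t, (t+l_1)⁻¹, …, (t+l_{d-1})⁻¹]`, realized as the localization of
`ℤ_q[t]` at the multiplicative set generated by the `t + l i`. -/
abbrev Rd (q d : ℕ) (l : Fin (d-1) → ZMod q) := Localization (dlSub q d l)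

/-- The image of `t + l i` in `R_d(ℤ_q)`, as a unit. -/
noncomputable def tU (q d : ℕ) (l : Fin (d-1) → ZMod q) (i : Fin (d-1)) : (Rd q d l)ˣ :=
  (IsLocalization.map_units (M := dlSub q d l) (Rd q d l)
    ⟨X + C (l i), Submonoid.subset_closure ⟨i, rfl⟩⟩).unit

/-- The monomial `∏ i (t + l i) ^ (v i)`, as a unit of `R_d(ℤ_q)`. -/
noncomputable def monU (q d : ℕ) (l : Fin (d-1) → ZMod q) (v : Fin (d-1) → ℤ) : (Rd q d l)ˣ :=
  ∏ i, tU q d l i ^ (v i)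

/-- The condition on a `(d-1) × (d-1)` integer matrix `β = (b k i)` that, for all `i ≠ j`,
`(l j - l i) + ∏ k (t + l k)^(b k i) - ∏ k (t + l k)^(b k j) = 0` holds in `R_d(ℤ_q)`. -/
def kCond (q d : ℕ) (l : Fin (d-1) → ZMod q) (β : Matrix (Fin (d-1)) (Fin (d-1)) ℤ) : Prop :=
  ∀ i j : Fin (d-1), i ≠ j →
    algebraMap (Polynomial (ZMod q)) (Rd q d l) (C (l j - l i))
      + (monU q d l (fun k => β k i) : Rd q d l)
      - (monU q d l (fun k => β k j) : Rd q d l) = 0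

/-- The set `𝒦` of invertible integer matrices `β` such that the defining identities hold
both for the entries of `β` and for the entries of `β⁻¹`. -/
def kSet (q d : ℕ) (l : Fin (d-1) → ZMod q) : Set (Matrix.GeneralLinearGroup (Fin (d-1)) ℤ) :=
  {β | kCond q d l ↑β ∧ kCond q d l ↑(β⁻¹)}

namespace St7

variable {q : ℕ} (l : Fin 2 → ZMod q)

noncomputable def sm : Polynomial (ZMod q) →+* Rd q 3 l := algebraMap _ _

lemma sInj : Function.Injective (sm l) := by
  apply IsLocalization.injective (M := dlSub q 3 l)
  rw [dlSub, Submonoid.closure_le]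
  rintro p ⟨i, rfl⟩
  exact (monic_X_add_C (l i)).mem_nonZeroDivisors

lemma tU_coe (i : Fin 2) : ((tU q 3 l i : (Rd q 3 l)ˣ) : Rd q 3 l) = sm l (X + C (l i)) :=
  IsUnit.unit_spec _

/-- The central equation. -/
def Eqn (a b c d : ℤ) : Prop :=
  sm l (C (l 1)) + ((tU q 3 l 0 ^ a * tU q 3 l 1 ^ b : (Rd q 3 l)ˣ) : Rd q 3 l)
    - ((tU q 3 l 0 ^ c * tU q 3 l 1 ^ d : (Rd q 3 l)ˣ) : Rd q 3 l) = 0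

lemma kCond_iff (hl0 : l 0 = 0) (M : Matrix (Fin 2) (Fin 2) ℤ) :
    kCond q 3 l M ↔ Eqn l (M 0 0) (M 1 0) (M 0 1) (M 1 1) := by
  have hmon : ∀ v : Fin 2 → ℤ, monU q 3 l v = tU q 3 l 0 ^ v 0 * tU q 3 l 1 ^ v 1 := by
    intro v; rw [monU, Fin.prod_univ_two]
  constructor
  · intro h
    have h01 := h 0 1 (by decide)
    rw [hmon, hmon] at h01
    simpa [Eqn, hl0, sm] using h01
  · intro h i j hij
    have h01 : algebraMap (Polynomial (ZMod q)) (Rd q 3 l) (C (l 1 - l 0))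
        + (monU q 3 l (fun k => M k 0) : Rd q 3 l) - (monU q 3 l (fun k => M k 1) : Rd q 3 l)
        = 0 := by
      rw [hmon, hmon]
      simpa [Eqn, hl0, sm] using h
    have h10 : algebraMap (Polynomial (ZMod q)) (Rd q 3 l) (C (l 0 - l 1))
        + (monU q 3 l (fun k => M k 1) : Rd q 3 l) - (monU q 3 l (fun k => M k 0) : Rd q 3 l)
        = 0 := by
      have : C (l 0 - l 1) = - C (l 1 - l 0) := by rw [← map_neg]; ring_nf
      rw [this, map_neg]
      linear_combination -h01
    fin_cases i <;> fin_cases j <;> first | exact absurd rfl hij | exact h01 | exact h10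

section Generic
variable {R : Type*} [CommRing R]

lemma gen_key {q : ℕ} (w : ZMod q) (s : Polynomial (ZMod q) →+* R) (U V : Rˣ)
    (hU : (U : R) = s X) (hV : (V : R) = s (X + C w))
    (a b c d : ℤ) (A B a' b' c' d' : ℕ)
    (ha : a + A = (a' : ℤ)) (hb : b + B = (b' : ℤ))
    (hc : c + A = (c' : ℤ)) (hd : d + B = (d' : ℤ)) :
    s (X ^ a' * (X + C w) ^ b' - X ^ c' * (X + C w) ^ d' + C w * (X ^ A * (X + C w) ^ B))
      = (s (C w) + ((U ^ a * V ^ b : Rˣ) : R) - ((U ^ c * V ^ d : Rˣ) : R))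
          * ((U ^ (A:ℤ) * V ^ (B:ℤ) : Rˣ) : R) := by
  have m3 : ((U ^ (A:ℤ) * V ^ (B:ℤ) : Rˣ) : R) = s (X ^ A * (X + C w) ^ B) := by
    rw [zpow_natCast, zpow_natCast, Units.val_mul, Units.val_pow_eq_pow_val,
      Units.val_pow_eq_pow_val, hU, hV, ← map_pow, ← map_pow, ← map_mul]
  have m1 : ∀ (x y : ℤ) (x' y' : ℕ), x + A = (x' : ℤ) → y + B = (y' : ℤ) →
      ((U ^ x * V ^ y : Rˣ) : R) * ((U ^ (A:ℤ) * V ^ (B:ℤ) : Rˣ) : R)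
        = s (X ^ x' * (X + C w) ^ y') := by
    intro x y x' y' hx hy
    rw [← Units.val_mul, mul_mul_mul_comm, ← zpow_add, ← zpow_add, hx, hy,
      zpow_natCast, zpow_natCast, Units.val_mul, Units.val_pow_eq_pow_val,
      Units.val_pow_eq_pow_val, hU, hV, ← map_pow, ← map_pow, ← map_mul]
  rw [sub_mul, add_mul, m1 a b a' b' ha hb, m1 c d c' d' hc hd, m3, ← map_mul,
    map_add, map_sub]
  ring

lemma mono_coeff_self (w : R) (x y : ℕ) : (X ^ x * (X + C w) ^ y).coeff x = w ^ y := by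
  have h := Polynomial.coeff_X_pow_mul ((X + C w) ^ y) x 0
  rw [zero_add] at h
  rw [h, coeff_zero_eq_eval_zero]
  simp

lemma mono_coeff_lt (w : R) {x k : ℕ} (y : ℕ) (h : k < x) :
    (X ^ x * (X + C w) ^ y).coeff k = 0 := by
  rw [mul_comm, coeff_mul_X_pow', if_neg (by omega)]

end Generic

variable {q : ℕ} (l : Fin 2 → ZMod q)

lemma tU0_coe (hl0 : l 0 = 0) : ((tU q 3 l 0 : (Rd q 3 l)ˣ) : Rd q 3 l) = sm l X := by
  rw [tU_coe, hl0, map_zero, add_zero]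

lemma eqn_iff_poly (hl0 : l 0 = 0) (a b c d : ℤ) (A B a' b' c' d' : ℕ)
    (ha : a + A = (a' : ℤ)) (hb : b + B = (b' : ℤ))
    (hc : c + A = (c' : ℤ)) (hd : d + B = (d' : ℤ)) :
    Eqn l a b c d ↔
      X ^ a' * (X + C (l 1)) ^ b' - X ^ c' * (X + C (l 1)) ^ d'
        + C (l 1) * (X ^ A * (X + C (l 1)) ^ B) = 0 := by
  have key := gen_key (l 1) (sm l) (tU q 3 l 0) (tU q 3 l 1) (tU0_coe l hl0) (tU_coe l 1)
    a b c d A B a' b' c' d' ha hb hc hd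
  constructor
  · intro h
    apply sInj l
    rw [map_zero, key, h, zero_mul]
  · intro h
    have h2 := congrArg (sm l) h
    rw [map_zero, key] at h2
    exact (Units.mul_left_eq_zero _).1 h2

lemma shape_ac (hq : 2 ≤ q) (hl0 : l 0 = 0) (hw : IsUnit (l 1)) {a b c d : ℤ}
    (h : Eqn l a b c d) :
    (a = c ∧ a < 0) ∨ (a = 0 ∧ 0 < c) ∨ (c = 0 ∧ 0 < a) ∨ (a = 0 ∧ c = 0) := by
  haveI : Fact (1 < q) := ⟨hq⟩
  have hmb := Int.self_le_toNat (max (-b) (-d))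
  have hm1 := le_max_left (-b) (-d)
  have hm2 := le_max_right (-b) (-d)
  set B : ℕ := (max (-b) (-d)).toNat with hB
  have h1 : ¬(0 < a ∧ 0 < c) := by
    rintro ⟨ha0, hc0⟩
    have hpoly := (eqn_iff_poly l hl0 a b c d 0 B a.toNat (b+B).toNat c.toNat (d+B).toNat
      (by omega) (by omega) (by omega) (by omega)).1 h
    have hco := congrArg (fun p => p.coeff 0) hpoly
    simp only [coeff_add, coeff_sub, coeff_zero] at hco
    rw [mono_coeff_lt _ _ (by omega), mono_coeff_lt _ _ (by omega), coeff_C_mul,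
      mono_coeff_self] at hco
    exact (hw.mul ((hw.pow B))).ne_zero (by linear_combination hco)
  have h2 : ¬(a < c ∧ a < 0) := by
    rintro ⟨hac, ha0⟩
    have hpoly := (eqn_iff_poly l hl0 a b c d (-a).toNat B 0 (b+B).toNat
      (c + (-a).toNat).toNat (d+B).toNat
      (by omega) (by omega) (by omega) (by omega)).1 h
    have hco := congrArg (fun p => p.coeff 0) hpoly
    simp only [coeff_add, coeff_sub, coeff_zero] at hco
    rw [mono_coeff_self, mono_coeff_lt _ _ (by omega), coeff_C_mul,
      mono_coeff_lt _ _ (by omega)] at hco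
    exact (hw.pow _).ne_zero (by linear_combination hco)
  have h3 : ¬(c < a ∧ c < 0) := by
    rintro ⟨hca, hc0⟩
    have hpoly := (eqn_iff_poly l hl0 a b c d (-c).toNat B (a + (-c).toNat).toNat (b+B).toNat
      0 (d+B).toNat
      (by omega) (by omega) (by omega) (by omega)).1 h
    have hco := congrArg (fun p => p.coeff 0) hpoly
    simp only [coeff_add, coeff_sub, coeff_zero] at hco
    rw [mono_coeff_self, mono_coeff_lt _ _ (by omega), coeff_C_mul,
      mono_coeff_lt _ _ (by omega)] at hco
    exact (hw.pow _).ne_zero (by linear_combination -hco)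
  omega

lemma poly_flip (w : ZMod q) (A B a' b' c' d' : ℕ)
    (h : X ^ a' * (X + C w) ^ b' - X ^ c' * (X + C w) ^ d'
        + C w * (X ^ A * (X + C w) ^ B) = 0) :
    X ^ b' * (X + C (-w)) ^ a' - X ^ d' * (X + C (-w)) ^ c'
        + C w * (X ^ B * (X + C (-w)) ^ A) = 0 := by
  have h2 := congrArg (fun p => Polynomial.aeval (X - C w : (ZMod q)[X]) p) h
  simp only [map_add, map_sub, map_mul, map_pow, aeval_X, aeval_C, algebraMap_eq,
    sub_add_cancel, map_zero] at h2
  have hC : (C (-w) : (ZMod q)[X]) = - C w := by rw [map_neg]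
  rw [hC]
  linear_combination h2

lemma shape_bd (hq : 2 ≤ q) (hl0 : l 0 = 0) (hw : IsUnit (l 1)) {a b c d : ℤ}
    (h : Eqn l a b c d) :
    (b = d ∧ b < 0) ∨ (b = 0 ∧ 0 < d) ∨ (d = 0 ∧ 0 < b) ∨ (b = 0 ∧ d = 0) := by
  haveI : Fact (1 < q) := ⟨hq⟩
  have hw' : IsUnit (-(l 1)) := hw.neg
  have hmb := Int.self_le_toNat (max (-a) (-c))
  have hm1 := le_max_left (-a) (-c)
  have hm2 := le_max_right (-a) (-c)
  set A : ℕ := (max (-a) (-c)).toNat with hA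
  have h1 : ¬(0 < b ∧ 0 < d) := by
    rintro ⟨hb0, hd0⟩
    have hpoly := poly_flip (l 1) A 0 (a+A).toNat b.toNat (c+A).toNat d.toNat
      ((eqn_iff_poly l hl0 a b c d A 0 (a+A).toNat b.toNat (c+A).toNat d.toNat
        (by omega) (by omega) (by omega) (by omega)).1 h)
    have hco := congrArg (fun p => p.coeff 0) hpoly
    simp only [coeff_add, coeff_sub, coeff_zero] at hco
    rw [mono_coeff_lt _ _ (by omega), mono_coeff_lt _ _ (by omega), coeff_C_mul,
      mono_coeff_self] at hco
    exact (hw.mul ((hw'.pow A))).ne_zero (by linear_combination hco)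
  have h2 : ¬(b < d ∧ b < 0) := by
    rintro ⟨hbd, hb0⟩
    have hpoly := poly_flip (l 1) A (-b).toNat (a+A).toNat 0 (c+A).toNat
      (d + (-b).toNat).toNat
      ((eqn_iff_poly l hl0 a b c d A (-b).toNat (a+A).toNat 0 (c+A).toNat
        (d + (-b).toNat).toNat
        (by omega) (by omega) (by omega) (by omega)).1 h)
    have hco := congrArg (fun p => p.coeff 0) hpoly
    simp only [coeff_add, coeff_sub, coeff_zero] at hco
    rw [mono_coeff_self, mono_coeff_lt _ _ (by omega), coeff_C_mul,
      mono_coeff_lt _ _ (by omega)] at hco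
    exact (hw'.pow _).ne_zero (by linear_combination hco)
  have h3 : ¬(d < b ∧ d < 0) := by
    rintro ⟨hdb, hd0⟩
    have hpoly := poly_flip (l 1) A (-d).toNat (a+A).toNat (b + (-d).toNat).toNat (c+A).toNat 0
      ((eqn_iff_poly l hl0 a b c d A (-d).toNat (a+A).toNat (b + (-d).toNat).toNat (c+A).toNat 0
        (by omega) (by omega) (by omega) (by omega)).1 h)
    have hco := congrArg (fun p => p.coeff 0) hpoly
    simp only [coeff_add, coeff_sub, coeff_zero] at hco
    rw [mono_coeff_self, mono_coeff_lt _ _ (by omega), coeff_C_mul,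
      mono_coeff_lt _ _ (by omega)] at hco
    exact (hw'.pow _).ne_zero (by linear_combination -hco)
  omega

lemma pin_id (hl0 : l 0 = 0) : Eqn l 1 0 0 1 :=
  (eqn_iff_poly l hl0 1 0 0 1 0 0 1 0 0 1 (by norm_num) (by norm_num) (by norm_num)
    (by norm_num)).2 (by ring)

lemma pin2_iff (hl0 : l 0 = 0) : Eqn l 1 (-1) 0 (-1) ↔
    X ^ 1 * (X + C (l 1)) ^ 0 - X ^ 0 * (X + C (l 1)) ^ 0
      + C (l 1) * (X ^ 0 * (X + C (l 1)) ^ 1) = 0 :=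
  eqn_iff_poly l hl0 1 (-1) 0 (-1) 0 1 1 0 0 0 (by norm_num) (by norm_num) (by norm_num)
    (by norm_num)

lemma pin2_fwd (hl0 : l 0 = 0) (h : Eqn l 1 (-1) 0 (-1)) : l 1 = -1 := by
  have hco := congrArg (fun p => p.coeff 1) ((pin2_iff l hl0).1 h)
  simp [coeff_one] at hco
  linear_combination hco

lemma pin2_bwd (hl0 : l 0 = 0) (hm : l 1 = -1) : Eqn l 1 (-1) 0 (-1) := by
  apply (pin2_iff l hl0).2
  rw [hm, map_neg, map_one]
  ring

lemma pin3_iff (hl0 : l 0 = 0) : Eqn l (-1) 0 (-1) 1 ↔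
    X ^ 0 * (X + C (l 1)) ^ 0 - X ^ 0 * (X + C (l 1)) ^ 1
      + C (l 1) * (X ^ 1 * (X + C (l 1)) ^ 0) = 0 :=
  eqn_iff_poly l hl0 (-1) 0 (-1) 1 1 0 0 0 0 1 (by norm_num) (by norm_num) (by norm_num)
    (by norm_num)

lemma pin3_fwd (hl0 : l 0 = 0) (h : Eqn l (-1) 0 (-1) 1) : l 1 = 1 := by
  have hco := congrArg (fun p => p.coeff 1) ((pin3_iff l hl0).1 h)
  simp [coeff_one] at hco
  linear_combination hco

lemma pin3_bwd (hl0 : l 0 = 0) (hm : l 1 = 1) : Eqn l (-1) 0 (-1) 1 := by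
  apply (pin3_iff l hl0).2
  rw [hm, map_one]
  ring

lemma pin4_iff (hl0 : l 0 = 0) : Eqn l (-1) 1 (-1) 0 ↔
    X ^ 0 * (X + C (l 1)) ^ 1 - X ^ 0 * (X + C (l 1)) ^ 0
      + C (l 1) * (X ^ 1 * (X + C (l 1)) ^ 0) = 0 :=
  eqn_iff_poly l hl0 (-1) 1 (-1) 0 1 0 0 1 0 0 (by norm_num) (by norm_num) (by norm_num)
    (by norm_num)

lemma pin4_fwd (hl0 : l 0 = 0) (h : Eqn l (-1) 1 (-1) 0) : (2 : ZMod q) = 0 := by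
  have hco0 := congrArg (fun p => p.coeff 0) ((pin4_iff l hl0).1 h)
  have hco1 := congrArg (fun p => p.coeff 1) ((pin4_iff l hl0).1 h)
  simp [coeff_one] at hco0 hco1
  linear_combination hco1 - hco0

lemma twoC (h2 : (2 : ZMod q) = 0) : (2 : (ZMod q)[X]) = 0 := by
  rw [← map_ofNat (C : ZMod q →+* (ZMod q)[X]) 2, h2, map_zero]

lemma pin4_bwd (hl0 : l 0 = 0) (hm : l 1 = 1) (h2 : (2 : ZMod q) = 0) :
    Eqn l (-1) 1 (-1) 0 := by
  apply (pin4_iff l hl0).2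
  rw [hm, map_one]
  linear_combination (X : (ZMod q)[X]) * twoC h2

lemma pin5_iff (hl0 : l 0 = 0) : Eqn l 0 (-1) 1 (-1) ↔
    X ^ 0 * (X + C (l 1)) ^ 0 - X ^ 1 * (X + C (l 1)) ^ 0
      + C (l 1) * (X ^ 0 * (X + C (l 1)) ^ 1) = 0 :=
  eqn_iff_poly l hl0 0 (-1) 1 (-1) 0 1 0 0 1 0 (by norm_num) (by norm_num) (by norm_num)
    (by norm_num)

lemma pin5_fwd (hl0 : l 0 = 0) (h : Eqn l 0 (-1) 1 (-1)) : (2 : ZMod q) = 0 := by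
  have hco0 := congrArg (fun p => p.coeff 0) ((pin5_iff l hl0).1 h)
  have hco1 := congrArg (fun p => p.coeff 1) ((pin5_iff l hl0).1 h)
  simp [coeff_one] at hco0 hco1
  have hm : l 1 = 1 := by linear_combination hco1
  rw [hm] at hco0
  linear_combination hco0

lemma pin5_bwd (hl0 : l 0 = 0) (hm : l 1 = 1) (h2 : (2 : ZMod q) = 0) :
    Eqn l 0 (-1) 1 (-1) := by
  apply (pin5_iff l hl0).2
  rw [hm, map_one]
  linear_combination twoC h2

lemma pin6_iff (hl0 : l 0 = 0) : Eqn l 0 1 1 0 ↔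
    X ^ 0 * (X + C (l 1)) ^ 1 - X ^ 1 * (X + C (l 1)) ^ 0
      + C (l 1) * (X ^ 0 * (X + C (l 1)) ^ 0) = 0 :=
  eqn_iff_poly l hl0 0 1 1 0 0 0 0 1 1 0 (by norm_num) (by norm_num) (by norm_num)
    (by norm_num)

lemma pin6_fwd (hl0 : l 0 = 0) (hw : IsUnit (l 1)) (h : Eqn l 0 1 1 0) :
    (2 : ZMod q) = 0 := by
  have hco0 := congrArg (fun p => p.coeff 0) ((pin6_iff l hl0).1 h)
  simp [coeff_one] at hco0
  rcases hw with ⟨u, hu⟩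
  have : (2 : ZMod q) * (u : ZMod q) = 0 := by rw [← hu] at hco0; linear_combination hco0
  exact (Units.mul_left_eq_zero u).1 this

lemma pin6_bwd (hl0 : l 0 = 0) (hm : l 1 = 1) (h2 : (2 : ZMod q) = 0) : Eqn l 0 1 1 0 := by
  apply (pin6_iff l hl0).2
  rw [hm, map_one]
  linear_combination twoC h2


lemma int_pin_neg {x y : ℤ} (hx : x < 0) (hy : 0 < y) (h : x * y = 1 ∨ x * y = -1) :
    x = -1 ∧ y = 1 := by
  have hneg : x * y < 0 := mul_neg_of_neg_of_pos hx hy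
  have hp : x * y = -1 := by
    rcases h with h | h
    · linarith
    · exact h
  have hu : IsUnit x := IsUnit.of_mul_eq_one (-y) (by linear_combination -hp)
  rcases Int.isUnit_iff.1 hu with h1 | h1
  · exfalso; linarith
  · rw [h1] at hp
    exact ⟨h1, by linarith⟩

lemma int_pin_pos {x y : ℤ} (hx : 0 < x) (hy : 0 < y) (h : x * y = 1 ∨ x * y = -1) :
    x = 1 ∧ y = 1 := by
  have hpos : 0 < x * y := mul_pos hx hy
  have hp : x * y = 1 := by
    rcases h with h | h
    · exact h
    · linarith
  have hu : IsUnit x := IsUnit.of_mul_eq_one y hp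
  rcases Int.isUnit_iff.1 hu with h1 | h1
  · rw [h1] at hp
    exact ⟨h1, by linarith⟩
  · exfalso; linarith

lemma classify (hq : 2 ≤ q) (hl0 : l 0 = 0) (hw : IsUnit (l 1)) {a b c d : ℤ}
    (hdet : a * d - c * b = 1 ∨ a * d - c * b = -1) (h : Eqn l a b c d) :
    (a = 1 ∧ b = 0 ∧ c = 0 ∧ d = 1) ∨
    ((a = 1 ∧ b = -1 ∧ c = 0 ∧ d = -1) ∧ l 1 = -1) ∨
    ((a = -1 ∧ b = 0 ∧ c = -1 ∧ d = 1) ∧ l 1 = 1) ∨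
    ((a = -1 ∧ b = 1 ∧ c = -1 ∧ d = 0) ∧ (2 : ZMod q) = 0) ∨
    ((a = 0 ∧ b = -1 ∧ c = 1 ∧ d = -1) ∧ (2 : ZMod q) = 0) ∨
    ((a = 0 ∧ b = 1 ∧ c = 1 ∧ d = 0) ∧ (2 : ZMod q) = 0) := by
  rcases shape_ac l hq hl0 hw h with ⟨hac, ha0⟩|⟨ha0, hc0⟩|⟨hc0, ha0⟩|⟨ha0, hc0⟩ <;>
    rcases shape_bd l hq hl0 hw h with ⟨hbd, hb0⟩|⟨hb0, hd0⟩|⟨hd0, hb0⟩|⟨hb0, hd0⟩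
  -- case N N : a=c<0, b=d<0 : det = 0
  · rw [hac, hbd] at hdet; norm_num [sub_self] at hdet
  -- case N Q1 : a=c<0, b=0<d : det = a*d = -1, a=-1,d=1 : l 1 = 1
  · rw [hac] at ha0
    rw [hac, hb0] at hdet
    simp only [mul_zero, sub_zero] at hdet
    obtain ⟨hcv, hdv⟩ := int_pin_neg ha0 hd0 hdet
    have hav : a = -1 := hac.trans hcv
    rw [hav, hb0, hcv, hdv] at h
    exact Or.inr (Or.inr (Or.inl ⟨⟨hav, hb0, hcv, hdv⟩, pin3_fwd l hl0 h⟩))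
  -- case N Q2 : a=c<0, d=0<b : det = -c*b = ±1, c=-1,b=1 : 2=0
  · rw [hac] at ha0
    rw [hac, hd0] at hdet
    simp only [mul_zero, zero_sub] at hdet
    have hdet' : c * b = 1 ∨ c * b = -1 := by
      rcases hdet with h' | h'
      · right; linarith
      · left; linarith
    obtain ⟨hcv, hbv⟩ := int_pin_neg ha0 hb0 hdet'
    have hav : a = -1 := hac.trans hcv
    rw [hav, hbv, hcv, hd0] at h
    exact Or.inr (Or.inr (Or.inr (Or.inl ⟨⟨hav, hbv, hcv, hd0⟩, pin4_fwd l hl0 h⟩)))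
  -- case N Z : a=c<0, b=d=0 : det = 0
  · rw [hac, hb0, hd0] at hdet; norm_num at hdet
  -- case P1 N : a=0<c, b=d<0 : det = -c*b = ±1, c=1,b=-1 : 2=0
  · rw [hbd] at hb0
    rw [ha0, hbd] at hdet
    simp only [zero_mul, zero_sub] at hdet
    have hdet' : d * c = 1 ∨ d * c = -1 := by
      rcases hdet with h' | h'
      · right; linarith [mul_comm c d]
      · left; linarith [mul_comm c d]
    obtain ⟨hdv, hcv⟩ := int_pin_neg hb0 hc0 hdet'
    have hbv : b = -1 := hbd.trans hdv
    rw [ha0, hbv, hcv, hdv] at h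
    exact Or.inr (Or.inr (Or.inr (Or.inr (Or.inl ⟨⟨ha0, hbv, hcv, hdv⟩,
      pin5_fwd l hl0 h⟩))))
  -- case P1 Q1 : a=0, b=0 : det = 0
  · rw [ha0, hb0] at hdet; norm_num at hdet
  -- case P1 Q2 : a=0<c, d=0<b : det = -c*b = -1, c=1,b=1 : 2=0
  · rw [ha0, hd0] at hdet
    simp only [zero_mul, mul_zero, zero_sub] at hdet
    have hdet' : c * b = 1 ∨ c * b = -1 := by
      rcases hdet with h' | h'
      · right; linarith
      · left; linarith
    obtain ⟨hcv, hbv⟩ := int_pin_pos hc0 hb0 hdet'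
    rw [ha0, hbv, hcv, hd0] at h
    exact Or.inr (Or.inr (Or.inr (Or.inr (Or.inr ⟨⟨ha0, hbv, hcv, hd0⟩,
      pin6_fwd l hl0 hw h⟩))))
  -- case P1 Z : a=0, b=d=0 : det = 0
  · rw [ha0, hb0, hd0] at hdet; norm_num at hdet
  -- case P2 N : c=0, 0<a, b=d<0 : det = a*d = -1, a=1,d=-1 : l 1 = -1
  · rw [hbd] at hb0
    rw [hc0, hbd] at hdet
    simp only [zero_mul, sub_zero] at hdet
    have hdet' : d * a = 1 ∨ d * a = -1 := by
      rcases hdet with h' | h'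
      · left; linarith [mul_comm a d]
      · right; linarith [mul_comm a d]
    obtain ⟨hdv, hav⟩ := int_pin_neg hb0 ha0 hdet'
    have hbv : b = -1 := hbd.trans hdv
    rw [hav, hbv, hc0, hdv] at h
    exact Or.inr (Or.inl ⟨⟨hav, hbv, hc0, hdv⟩, pin2_fwd l hl0 h⟩)
  -- case P2 Q1 : c=0, 0<a, b=0, 0<d : det = a*d = 1, a=d=1 : identity
  · rw [hc0, hb0] at hdet
    simp only [zero_mul, mul_zero, sub_zero] at hdet
    obtain ⟨hav, hdv⟩ := int_pin_pos ha0 hd0 hdet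
    exact Or.inl ⟨hav, hb0, hc0, hdv⟩
  -- case P2 Q2 : c=0, d=0 : det = 0
  · rw [hc0, hd0] at hdet; norm_num at hdet
  -- case P2 Z : c=0, b=d=0 : det = 0
  · rw [hc0, hb0, hd0] at hdet; norm_num at hdet
  -- case Z N : a=c=0 : det = 0
  · rw [ha0, hc0] at hdet; norm_num at hdet
  -- case Z Q1
  · rw [ha0, hc0] at hdet; norm_num at hdet
  -- case Z Q2
  · rw [ha0, hc0] at hdet; norm_num at hdet
  -- case Z Z
  · rw [ha0, hc0] at hdet; norm_num at hdet

lemma det_pm (β : Matrix.GeneralLinearGroup (Fin 2) ℤ) :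
    (β : Matrix (Fin 2) (Fin 2) ℤ) 0 0 * (β : Matrix (Fin 2) (Fin 2) ℤ) 1 1
      - (β : Matrix (Fin 2) (Fin 2) ℤ) 0 1 * (β : Matrix (Fin 2) (Fin 2) ℤ) 1 0 = 1 ∨
    (β : Matrix (Fin 2) (Fin 2) ℤ) 0 0 * (β : Matrix (Fin 2) (Fin 2) ℤ) 1 1
      - (β : Matrix (Fin 2) (Fin 2) ℤ) 0 1 * (β : Matrix (Fin 2) (Fin 2) ℤ) 1 0 = -1 := by
  have hu : IsUnit ((β : Matrix (Fin 2) (Fin 2) ℤ)).det := by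
    have h1 : IsUnit (β : Matrix (Fin 2) (Fin 2) ℤ) := ⟨β, rfl⟩
    exact h1.map Matrix.detMonoidHom
  rw [Matrix.det_fin_two] at hu
  exact Int.isUnit_iff.1 hu

lemma main_fwd (hq : 2 ≤ q) (hl0 : l 0 = 0) (hw : IsUnit (l 1))
    (β : Matrix.GeneralLinearGroup (Fin 2) ℤ) (h : kCond q 3 l ↑β) :
    (β : Matrix (Fin 2) (Fin 2) ℤ) = 1 ∨
    ((β : Matrix (Fin 2) (Fin 2) ℤ) = !![(1:ℤ), 0; -1, -1] ∧ l 1 = -1) ∨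
    ((β : Matrix (Fin 2) (Fin 2) ℤ) = !![(-1:ℤ), -1; 0, 1] ∧ l 1 = 1) ∨
    ((β : Matrix (Fin 2) (Fin 2) ℤ) = !![(-1:ℤ), -1; 1, 0] ∧ (2 : ZMod q) = 0) ∨
    ((β : Matrix (Fin 2) (Fin 2) ℤ) = !![(0:ℤ), 1; -1, -1] ∧ (2 : ZMod q) = 0) ∨
    ((β : Matrix (Fin 2) (Fin 2) ℤ) = !![(0:ℤ), 1; 1, 0] ∧ (2 : ZMod q) = 0) := by
  have hE := (kCond_iff l hl0 ↑β).1 h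
  have heta := Matrix.eta_fin_two (β : Matrix (Fin 2) (Fin 2) ℤ)
  rcases classify l hq hl0 hw (det_pm β) hE with
    ⟨h1,h2,h3,h4⟩ | ⟨⟨h1,h2,h3,h4⟩,h5⟩ | ⟨⟨h1,h2,h3,h4⟩,h5⟩ | ⟨⟨h1,h2,h3,h4⟩,h5⟩
      | ⟨⟨h1,h2,h3,h4⟩,h5⟩ | ⟨⟨h1,h2,h3,h4⟩,h5⟩
  · exact Or.inl (by rw [heta, h1, h2, h3, h4, ← Matrix.one_fin_two])
  · exact Or.inr (Or.inl ⟨by rw [heta, h1, h2, h3, h4], h5⟩)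
  · exact Or.inr (Or.inr (Or.inl ⟨by rw [heta, h1, h2, h3, h4], h5⟩))
  · exact Or.inr (Or.inr (Or.inr (Or.inl ⟨by rw [heta, h1, h2, h3, h4], h5⟩)))
  · exact Or.inr (Or.inr (Or.inr (Or.inr (Or.inl ⟨by rw [heta, h1, h2, h3, h4], h5⟩))))
  · exact Or.inr (Or.inr (Or.inr (Or.inr (Or.inr ⟨by rw [heta, h1, h2, h3, h4], h5⟩))))

lemma kCond_one (hl0 : l 0 = 0) : kCond q 3 l (1 : Matrix (Fin 2) (Fin 2) ℤ) := by
  rw [kCond_iff l hl0]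
  simpa [Matrix.one_apply] using pin_id l hl0

lemma kCond_S (hl0 : l 0 = 0) (hm : l 1 = -1) : kCond q 3 l !![(1:ℤ), 0; -1, -1] := by
  rw [kCond_iff l hl0]
  simpa using pin2_bwd l hl0 hm

lemma kCond_B (hl0 : l 0 = 0) (hm : l 1 = 1) : kCond q 3 l !![(-1:ℤ), -1; 0, 1] := by
  rw [kCond_iff l hl0]
  simpa using pin3_bwd l hl0 hm

lemma kCond_P (hl0 : l 0 = 0) (hm : l 1 = 1) (h2 : (2 : ZMod q) = 0) :
    kCond q 3 l !![(-1:ℤ), -1; 1, 0] := by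
  rw [kCond_iff l hl0]
  simpa using pin4_bwd l hl0 hm h2

lemma kCond_P2 (hl0 : l 0 = 0) (hm : l 1 = 1) (h2 : (2 : ZMod q) = 0) :
    kCond q 3 l !![(0:ℤ), 1; -1, -1] := by
  rw [kCond_iff l hl0]
  simpa using pin5_bwd l hl0 hm h2

lemma kCond_Sw (hl0 : l 0 = 0) (hm : l 1 = 1) (h2 : (2 : ZMod q) = 0) :
    kCond q 3 l !![(0:ℤ), 1; 1, 0] := by
  rw [kCond_iff l hl0]
  simpa using pin6_bwd l hl0 hm h2

lemma inv_coe {n : Type*} [DecidableEq n] [Fintype n]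
    (β : Matrix.GeneralLinearGroup n ℤ) {M M' : Matrix n n ℤ}
    (hβ : (β : Matrix n n ℤ) = M) (h1 : M * M' = 1) (h2 : M' * M = 1) :
    ((β⁻¹ : Matrix.GeneralLinearGroup n ℤ) : Matrix n n ℤ) = M' := by
  have hb : β⁻¹ = (⟨M', M, h2, h1⟩ : (Matrix n n ℤ)ˣ) := by
    apply inv_eq_of_mul_eq_one_right
    apply Units.ext
    rw [Units.val_mul, hβ]
    exact h1
  rw [hb]

lemma two_ne {q : ℕ} (hq2 : 2 < q) : (2 : ZMod q) ≠ 0 := by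
  intro h
  have h' : ((2:ℕ) : ZMod q) = 0 := by exact_mod_cast h
  have hdvd : q ∣ 2 := (CharP.cast_eq_zero_iff (ZMod q) q 2).mp h'
  exact absurd (Nat.le_of_dvd (by norm_num) hdvd) (by omega)

lemma two_zero_of {q : ℕ} {l : Fin 2 → ZMod q} (h1 : l 1 = 1) (h2 : l 1 = -1) :
    (2 : ZMod q) = 0 := by linear_combination h2 - h1

def Pu : Matrix.GeneralLinearGroup (Fin 2) ℤ :=
  ⟨!![-1,-1;1,0], !![0,1;-1,-1], by decide, by decide⟩

def Su : Matrix.GeneralLinearGroup (Fin 2) ℤ :=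
  ⟨!![1,0;-1,-1], !![1,0;-1,-1], by decide, by decide⟩

def phi : DihedralGroup 3 → Matrix.GeneralLinearGroup (Fin 2) ℤ
  | .r i => Pu ^ i.val
  | .sr i => Su * Pu ^ i.val

def phiHom : DihedralGroup 3 →* Matrix.GeneralLinearGroup (Fin 2) ℤ where
  toFun := phi
  map_one' := by decide
  map_mul' := by decide

lemma phi_inj : Function.Injective phiHom :=
  (injective_iff_map_eq_one phiHom).2 (by decide)

lemma phi_range (γ : Matrix.GeneralLinearGroup (Fin 2) ℤ) :
    γ ∈ phiHom.range ↔
      ((γ : Matrix (Fin 2) (Fin 2) ℤ) = 1 ∨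
       (γ : Matrix (Fin 2) (Fin 2) ℤ) = !![(1:ℤ), 0; -1, -1] ∨
       (γ : Matrix (Fin 2) (Fin 2) ℤ) = !![(-1:ℤ), -1; 0, 1] ∨
       (γ : Matrix (Fin 2) (Fin 2) ℤ) = !![(-1:ℤ), -1; 1, 0] ∨
       (γ : Matrix (Fin 2) (Fin 2) ℤ) = !![(0:ℤ), 1; -1, -1] ∨
       (γ : Matrix (Fin 2) (Fin 2) ℤ) = !![(0:ℤ), 1; 1, 0]) := by
  constructor
  · rintro ⟨x, rfl⟩
    revert x
    decide
  · rintro (h | h | h | h | h | h)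
    · exact ⟨DihedralGroup.r 0, Units.ext (by rw [h]; decide)⟩
    · exact ⟨DihedralGroup.sr 0, Units.ext (by rw [h]; decide)⟩
    · exact ⟨DihedralGroup.sr 1, Units.ext (by rw [h]; decide)⟩
    · exact ⟨DihedralGroup.r 1, Units.ext (by rw [h]; decide)⟩
    · exact ⟨DihedralGroup.r 2, Units.ext (by rw [h]; decide)⟩
    · exact ⟨DihedralGroup.sr 2, Units.ext (by rw [h]; decide)⟩

end St7

/-- Theorem 3.3 (case `d = 3`).  For `𝒦` the group of matrices `β ∈ GL_2(ℤ)` satisfying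
the defining identities (for `β` and `β⁻¹`) in `R_3(ℤ_q)`:
(i) if `q > 2` and `l_2 = -1`, `𝒦` is the two-element group generated by `[[1,0],[-1,-1]]`;
(ii) if `q > 2` and `l_2 = 1`, `𝒦` is the two-element group generated by `[[-1,-1],[0,1]]`;
(iii) if `q = 2`, `𝒦` is isomorphic to the dihedral group of order `6`, consisting of the
identity and the five listed matrices;
(iv) if `q > 2` and `l_2 ∉ {1, -1}`, `𝒦` is trivial. -/
theorem statement7 (q : ℕ) (hq : 2 ≤ q) (l : Fin (3-1) → ZMod q)
    (hl0 : l 0 = 0) (hl2 : IsUnit (l 1)) :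
    (2 < q → l 1 = -1 →
      kSet q 3 l = {β : Matrix.GeneralLinearGroup (Fin (3-1)) ℤ | (β : Matrix (Fin (3-1)) (Fin (3-1)) ℤ) = 1 ∨
        (β : Matrix (Fin (3-1)) (Fin (3-1)) ℤ) = !![(1:ℤ), 0; -1, -1]}) ∧
    (2 < q → l 1 = 1 →
      kSet q 3 l = {β : Matrix.GeneralLinearGroup (Fin (3-1)) ℤ | (β : Matrix (Fin (3-1)) (Fin (3-1)) ℤ) = 1 ∨
        (β : Matrix (Fin (3-1)) (Fin (3-1)) ℤ) = !![(-1:ℤ), -1; 0, 1]}) ∧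
    (q = 2 →
      kSet q 3 l = {β : Matrix.GeneralLinearGroup (Fin (3-1)) ℤ | (β : Matrix (Fin (3-1)) (Fin (3-1)) ℤ) = 1 ∨
          (β : Matrix (Fin (3-1)) (Fin (3-1)) ℤ) = !![(1:ℤ), 0; -1, -1] ∨
          (β : Matrix (Fin (3-1)) (Fin (3-1)) ℤ) = !![(-1:ℤ), -1; 0, 1] ∨
          (β : Matrix (Fin (3-1)) (Fin (3-1)) ℤ) = !![(-1:ℤ), -1; 1, 0] ∨
          (β : Matrix (Fin (3-1)) (Fin (3-1)) ℤ) = !![(0:ℤ), 1; -1, -1] ∨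
          (β : Matrix (Fin (3-1)) (Fin (3-1)) ℤ) = !![(0:ℤ), 1; 1, 0]} ∧
      ∃ K : Subgroup (Matrix.GeneralLinearGroup (Fin (3-1)) ℤ),
        (K : Set (Matrix.GeneralLinearGroup (Fin (3-1)) ℤ)) = kSet q 3 l ∧
        Nonempty (K ≃* DihedralGroup 3)) ∧
    (2 < q → l 1 ≠ 1 → l 1 ≠ -1 → kSet q 3 l = {1}) := by
  refine ⟨?_, ?_, ?_, ?_⟩
  · -- (i)
    intro hq2 hm
    ext β
    simp only [kSet, Set.mem_setOf_eq]
    constructor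
    · rintro ⟨h1, -⟩
      rcases St7.main_fwd l hq hl0 hl2 β h1 with h|⟨h,-⟩|⟨-,hx⟩|⟨-,hx⟩|⟨-,hx⟩|⟨-,hx⟩
      · exact Or.inl h
      · exact Or.inr h
      · exact absurd (St7.two_zero_of hx hm) (St7.two_ne hq2)
      · exact absurd hx (St7.two_ne hq2)
      · exact absurd hx (St7.two_ne hq2)
      · exact absurd hx (St7.two_ne hq2)
    · rintro (h | h)
      · refine ⟨?_, ?_⟩
        · rw [h]; exact St7.kCond_one l hl0
        · rw [St7.inv_coe β (M' := 1) h (by decide) (by decide)]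
          exact St7.kCond_one l hl0
      · refine ⟨?_, ?_⟩
        · rw [h]; exact St7.kCond_S l hl0 hm
        · rw [St7.inv_coe β (M' := !![(1:ℤ), 0; -1, -1]) h (by decide) (by decide)]
          exact St7.kCond_S l hl0 hm
  · -- (ii)
    intro hq2 hm
    ext β
    simp only [kSet, Set.mem_setOf_eq]
    constructor
    · rintro ⟨h1, -⟩
      rcases St7.main_fwd l hq hl0 hl2 β h1 with h|⟨-,hx⟩|⟨h,-⟩|⟨-,hx⟩|⟨-,hx⟩|⟨-,hx⟩
      · exact Or.inl h
      · exact absurd (St7.two_zero_of hm hx) (St7.two_ne hq2)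
      · exact Or.inr h
      · exact absurd hx (St7.two_ne hq2)
      · exact absurd hx (St7.two_ne hq2)
      · exact absurd hx (St7.two_ne hq2)
    · rintro (h | h)
      · refine ⟨?_, ?_⟩
        · rw [h]; exact St7.kCond_one l hl0
        · rw [St7.inv_coe β (M' := 1) h (by decide) (by decide)]
          exact St7.kCond_one l hl0
      · refine ⟨?_, ?_⟩
        · rw [h]; exact St7.kCond_B l hl0 hm
        · rw [St7.inv_coe β (M' := !![(-1:ℤ), -1; 0, 1]) h (by decide) (by decide)]
          exact St7.kCond_B l hl0 hm
  · -- (iii)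
    intro hq2
    subst hq2
    have hm : l 1 = 1 := (by decide : ∀ x : ZMod 2, IsUnit x → x = 1) (l 1) hl2
    have hm' : l 1 = -1 := by rw [hm]; decide
    have h2 : (2 : ZMod 2) = 0 := by decide
    have hset : kSet 2 3 l = {β : Matrix.GeneralLinearGroup (Fin (3-1)) ℤ |
        (β : Matrix (Fin (3-1)) (Fin (3-1)) ℤ) = 1 ∨
        (β : Matrix (Fin (3-1)) (Fin (3-1)) ℤ) = !![(1:ℤ), 0; -1, -1] ∨
        (β : Matrix (Fin (3-1)) (Fin (3-1)) ℤ) = !![(-1:ℤ), -1; 0, 1] ∨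
        (β : Matrix (Fin (3-1)) (Fin (3-1)) ℤ) = !![(-1:ℤ), -1; 1, 0] ∨
        (β : Matrix (Fin (3-1)) (Fin (3-1)) ℤ) = !![(0:ℤ), 1; -1, -1] ∨
        (β : Matrix (Fin (3-1)) (Fin (3-1)) ℤ) = !![(0:ℤ), 1; 1, 0]} := by
      ext β
      simp only [kSet, Set.mem_setOf_eq]
      constructor
      · rintro ⟨h1, -⟩
        rcases St7.main_fwd l hq hl0 hl2 β h1 with h|⟨h,-⟩|⟨h,-⟩|⟨h,-⟩|⟨h,-⟩|⟨h,-⟩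
        · exact Or.inl h
        · exact Or.inr (Or.inl h)
        · exact Or.inr (Or.inr (Or.inl h))
        · exact Or.inr (Or.inr (Or.inr (Or.inl h)))
        · exact Or.inr (Or.inr (Or.inr (Or.inr (Or.inl h))))
        · exact Or.inr (Or.inr (Or.inr (Or.inr (Or.inr h))))
      · rintro (h | h | h | h | h | h)
        · exact ⟨by rw [h]; exact St7.kCond_one l hl0,
            by rw [St7.inv_coe β (M' := 1) h (by decide) (by decide)]
               exact St7.kCond_one l hl0⟩
        · exact ⟨by rw [h]; exact St7.kCond_S l hl0 hm',
            by rw [St7.inv_coe β (M' := !![(1:ℤ), 0; -1, -1]) h (by decide) (by decide)]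
               exact St7.kCond_S l hl0 hm'⟩
        · exact ⟨by rw [h]; exact St7.kCond_B l hl0 hm,
            by rw [St7.inv_coe β (M' := !![(-1:ℤ), -1; 0, 1]) h (by decide) (by decide)]
               exact St7.kCond_B l hl0 hm⟩
        · exact ⟨by rw [h]; exact St7.kCond_P l hl0 hm h2,
            by rw [St7.inv_coe β (M' := !![(0:ℤ), 1; -1, -1]) h (by decide) (by decide)]
               exact St7.kCond_P2 l hl0 hm h2⟩
        · exact ⟨by rw [h]; exact St7.kCond_P2 l hl0 hm h2,
            by rw [St7.inv_coe β (M' := !![(-1:ℤ), -1; 1, 0]) h (by decide) (by decide)]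
               exact St7.kCond_P l hl0 hm h2⟩
        · exact ⟨by rw [h]; exact St7.kCond_Sw l hl0 hm h2,
            by rw [St7.inv_coe β (M' := !![(0:ℤ), 1; 1, 0]) h (by decide) (by decide)]
               exact St7.kCond_Sw l hl0 hm h2⟩
    refine ⟨hset, St7.phiHom.range, ?_, ⟨(MonoidHom.ofInjective St7.phi_inj).symm⟩⟩
    ext γ
    rw [SetLike.mem_coe, St7.phi_range γ, hset]
    exact Iff.rfl
  · -- (iv)
    intro hq2 hne1 hnem1
    ext β
    simp only [kSet, Set.mem_setOf_eq, Set.mem_singleton_iff]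
    constructor
    · rintro ⟨h1, -⟩
      rcases St7.main_fwd l hq hl0 hl2 β h1 with h|⟨-,hx⟩|⟨-,hx⟩|⟨-,hx⟩|⟨-,hx⟩|⟨-,hx⟩
      · exact Units.ext (by rw [h]; exact Units.val_one.symm)
      · exact absurd hx hnem1
      · exact absurd hx hne1
      · exact absurd hx (St7.two_ne hq2)
      · exact absurd hx (St7.two_ne hq2)
      · exact absurd hx (St7.two_ne hq2)
    · intro h
      subst h
      refine ⟨?_, ?_⟩
      · rw [Units.val_one]; exact St7.kCond_one l hl0
      · rw [inv_one, Units.val_one]; exact St7.kCond_one l hl0
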